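/- Let m, s be positive natural numbers, let a_1, …, a_s : Fin m → ℤ be arbitrary vectors, and for each i ∈ Fin s let m_i ≥ 1 and let c_i : Fin m_i → ℤ have all coordinates nonzero, greatest common divisor of its coordinates equal to 1, and first coordinate positive. Set q = Σ_i m_i and p = m + Σ_i (m_i − 1), partition Fin q in order into blocks of sizes m_1, …, m_s, and let ĉ_i : Fin q → ℤ be the vector equal to c_i on the i-th block and 0 elsewhere. Then there exists a matrix A : Matrix (Fin p) (Fin q) ℤ such that: (i) for each i, A.mulVec ĉ_i is the vector whose first m coordinates are a_i and whose remaining p − m coordinates are 0; (ii) for every v ∈ ker_ℤ(A) and every i there is an integer t such that v agrees with t · ĉ_i on the i-th block; consequently, the map u ↦ Σ_i u_i • ĉ_i is a bijection from ker_ℤ(D) onto ker_ℤ(A), where D : Matrix (Fin m) (Fin s) ℤ is the matrix with columns a_1, …, a_s. -/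

import Mathlib

/-- The integer kernel of an integer matrix. -/
def kerZ {m n : ℕ} (A : Matrix (Fin m) (Fin n) ℤ) : Set (Fin n → ℤ) :=
  {u | A.mulVec u = 0}

/-- The index in `Fin (∑ k, msz k)` of the `j`-th entry of the `i`-th block, when
`Fin (∑ k, msz k)` is partitioned in order into blocks of sizes `msz 0, …, msz (s-1)`. -/
def blockIdx {s : ℕ} (msz : Fin s → ℕ) (i : Fin s) (j : Fin (msz i)) :
    Fin (∑ k, msz k) :=
  ⟨(∑ k ∈ Finset.univ.filter (fun k => k < i), msz k) + (j : ℕ), by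
    have h1 : (∑ k ∈ Finset.univ.filter (fun k => k < i), msz k) +
        (∑ k ∈ Finset.univ.filter (fun k => ¬ k < i), msz k) = ∑ k, msz k := by
      exact Finset.sum_filter_add_sum_filter_not _ _ _
    have h2 : msz i ≤ ∑ k ∈ Finset.univ.filter (fun k => ¬ k < i), msz k := by
      refine Finset.single_le_sum (fun _ _ => Nat.zero_le _) ?_
      simp
    have h3 : (j : ℕ) < msz i := j.isLt
    omega⟩

lemma off_lemma {s : ℕ} (msz : Fin s → ℕ) {i i' : Fin s} (h : i < i') :
    (∑ k ∈ Finset.univ.filter (fun k => k < i), msz k) + msz i ≤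
      ∑ k ∈ Finset.univ.filter (fun k => k < i'), msz k := by
  have hsub : insert i (Finset.univ.filter (fun k => k < i)) ⊆
      Finset.univ.filter (fun k => k < i') := by
    intro k hk
    simp only [Finset.mem_insert, Finset.mem_filter, Finset.mem_univ, true_and] at hk ⊢
    rcases hk with rfl | hk
    · exact h
    · exact hk.trans h
  have hni : i ∉ Finset.univ.filter (fun k => k < i) := by simp
  calc (∑ k ∈ Finset.univ.filter (fun k => k < i), msz k) + msz i
      = ∑ k ∈ insert i (Finset.univ.filter (fun k => k < i)), msz k := by
        rw [Finset.sum_insert hni]; ring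
    _ ≤ _ := Finset.sum_le_sum_of_subset hsub

lemma blockIdx_injective {s : ℕ} (msz : Fin s → ℕ) :
    Function.Injective (fun x : Σ i : Fin s, Fin (msz i) => blockIdx msz x.1 x.2) := by
  rintro ⟨i, j⟩ ⟨i', j'⟩ h
  simp only at h
  have hval : (∑ k ∈ Finset.univ.filter (fun k => k < i), msz k) + (j : ℕ) =
      (∑ k ∈ Finset.univ.filter (fun k => k < i'), msz k) + (j' : ℕ) :=
    congrArg Fin.val h
  have hii : i = i' := by
    rcases lt_trichotomy i i' with hlt | heq | hgt
    · exact absurd hval (by have := off_lemma msz hlt; have := j.isLt; omega)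
    · exact heq
    · exact absurd hval (by have := off_lemma msz hgt; have := j'.isLt; omega)
  subst hii
  have : (j : ℕ) = (j' : ℕ) := by omega
  exact Sigma.ext rfl (by simpa using Fin.ext this)

noncomputable def blockEquiv {s : ℕ} (msz : Fin s → ℕ) :
    (Σ i : Fin s, Fin (msz i)) ≃ Fin (∑ k, msz k) :=
  Equiv.ofBijective (fun x => blockIdx msz x.1 x.2)
    ((Fintype.bijective_iff_injective_and_card _).2 ⟨blockIdx_injective msz, by simp⟩)

@[simp] lemma blockEquiv_apply {s : ℕ} (msz : Fin s → ℕ) (x : Σ i : Fin s, Fin (msz i)) :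
    blockEquiv msz x = blockIdx msz x.1 x.2 := rfl

lemma exists_bezout {ι : Type*} [DecidableEq ι] (t : Finset ι) (f : ι → ℤ) :
    ∃ g : ι → ℤ, ∑ j ∈ t, g j * f j = t.gcd f := by
  classical
  induction t using Finset.induction with
  | empty => exact ⟨0, by simp⟩
  | insert b t ha ih =>
    obtain ⟨g, hg⟩ := ih
    refine ⟨fun j => if j = b then Int.gcdA (f b) (t.gcd f)
      else Int.gcdB (f b) (t.gcd f) * g j, ?_⟩
    rw [Finset.sum_insert ha, Finset.gcd_insert]
    have h1 : ∀ j ∈ t, (if j = b then Int.gcdA (f b) (t.gcd f)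
        else Int.gcdB (f b) (t.gcd f) * g j) * f j
        = Int.gcdB (f b) (t.gcd f) * (g j * f j) := by
      intro j hj
      rw [if_neg (by rintro rfl; exact ha hj), mul_assoc]
    rw [Finset.sum_congr rfl h1, ← Finset.mul_sum, hg]
    beta_reduce
    rw [if_pos rfl, ← Int.coe_gcd, Int.gcd_eq_gcd_ab]
    ring

/-- Bottom-row entries of the Lawrence matrix, indexed by sigma types. -/
def Brow {s : ℕ} (msz : Fin s → ℕ) (c : (i : Fin s) → Fin (msz i) → ℤ)
    (x : Σ i : Fin s, Fin (msz i - 1)) (y : Σ i : Fin s, Fin (msz i)) : ℤ :=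
  if _ : y.1 = x.1 then
    (if (y.2 : ℕ) = (x.2 : ℕ) then c x.1 ⟨(x.2 : ℕ) + 1, by have := x.2.isLt; omega⟩
     else if (y.2 : ℕ) = (x.2 : ℕ) + 1 then
       -(c x.1 ⟨(x.2 : ℕ), by have := x.2.isLt; omega⟩)
     else 0)
  else 0

lemma Brow_sum {s : ℕ} (msz : Fin s → ℕ) (c : (i : Fin s) → Fin (msz i) → ℤ)
    (x : Σ i : Fin s, Fin (msz i - 1)) (w : (Σ i : Fin s, Fin (msz i)) → ℤ) :
    ∑ y : Σ i : Fin s, Fin (msz i), Brow msz c x y * w y =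
      c x.1 ⟨(x.2 : ℕ) + 1, by have := x.2.isLt; omega⟩ *
          w ⟨x.1, ⟨(x.2 : ℕ), by have := x.2.isLt; omega⟩⟩
        - c x.1 ⟨(x.2 : ℕ), by have := x.2.isLt; omega⟩ *
          w ⟨x.1, ⟨(x.2 : ℕ) + 1, by have := x.2.isLt; omega⟩⟩ := by
  classical
  have hb1 : (x.2 : ℕ) + 1 < msz x.1 := by have := x.2.isLt; omega
  have hb0 : (x.2 : ℕ) < msz x.1 := by omega
  rw [← Finset.univ_sigma_univ, Finset.sum_sigma]
  rw [Finset.sum_eq_single x.1]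
  · have key : ∀ j : Fin (msz x.1), Brow msz c x ⟨x.1, j⟩ * w ⟨x.1, j⟩ =
        (if j = (⟨(x.2 : ℕ), hb0⟩ : Fin (msz x.1)) then
          c x.1 ⟨(x.2 : ℕ) + 1, hb1⟩ * w ⟨x.1, j⟩ else 0)
        + (if j = (⟨(x.2 : ℕ) + 1, hb1⟩ : Fin (msz x.1)) then
          -(c x.1 ⟨(x.2 : ℕ), hb0⟩) * w ⟨x.1, j⟩ else 0) := by
      intro j
      show (if _ : x.1 = x.1 then _ else (0:ℤ)) * w ⟨x.1, j⟩ = _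
      rw [dif_pos rfl]
      by_cases h0 : (j : ℕ) = (x.2 : ℕ)
      · rw [if_pos h0, if_pos (Fin.ext h0), if_neg (fun hh => by have := congrArg Fin.val hh; simp at this; omega), add_zero]
      · rw [if_neg h0, if_neg (fun hh => h0 (congrArg Fin.val hh))]
        by_cases h1 : (j : ℕ) = (x.2 : ℕ) + 1
        · rw [if_pos h1, if_pos (Fin.ext h1), zero_add]
        · rw [if_neg h1, if_neg (fun hh => h1 (congrArg Fin.val hh)), zero_mul, zero_add]
    rw [Finset.sum_congr rfl (fun j _ => key j), Finset.sum_add_distrib,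
      Finset.sum_ite_eq' Finset.univ, Finset.sum_ite_eq' Finset.univ]
    simp [sub_eq_add_neg]
  · intro i _ hne
    refine Finset.sum_eq_zero fun j _ => ?_
    show (if _ : i = x.1 then _ else (0:ℤ)) * w ⟨i, j⟩ = 0
    rw [dif_neg hne, zero_mul]
  · intro h; exact absurd (Finset.mem_univ _) h
theorem generalized_lawrence_construction (m s : ℕ) (hm : 0 < m) (hs : 0 < s)
    (a : Fin s → Fin m → ℤ)
    (msz : Fin s → ℕ) (hmsz : ∀ i, 1 ≤ msz i)
    (c : (i : Fin s) → Fin (msz i) → ℤ)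
    (hcfull : ∀ i j, c i j ≠ 0)
    (hcprim : ∀ i, Finset.univ.gcd (c i) = 1)
    (hcpos : ∀ i, 0 < c i ⟨0, hmsz i⟩)
    (hatc : Fin s → Fin (∑ k, msz k) → ℤ)
    (hhatc_block : ∀ i (j : Fin (msz i)), hatc i (blockIdx msz i j) = c i j)
    (hhatc_off : ∀ i (k : Fin (∑ k, msz k)),
      (∀ j : Fin (msz i), k ≠ blockIdx msz i j) → hatc i k = 0) :
    ∃ A : Matrix (Fin (m + ∑ k, (msz k - 1))) (Fin (∑ k, msz k)) ℤ,
      (∀ i, A.mulVec (hatc i) =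
        fun k : Fin (m + ∑ k, (msz k - 1)) =>
          if h : (k : ℕ) < m then a i ⟨(k : ℕ), h⟩ else 0) ∧
      (∀ v ∈ kerZ A, ∀ i, ∃ t : ℤ,
        ∀ j : Fin (msz i), v (blockIdx msz i j) = t * c i j) ∧
      Set.BijOn (fun u : Fin s → ℤ => ∑ i, u i • hatc i)
        (kerZ (Matrix.of fun k i => a i k)) (kerZ A) := by
  classical
  choose lam hlam using fun i => exists_bezout (Finset.univ : Finset (Fin (msz i))) (c i)
  have hlam1 : ∀ i, ∑ j, lam i j * c i j = 1 := fun i => by rw [hlam i, hcprim i]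
  set E := blockEquiv msz with hE
  set F := blockEquiv (fun k => msz k - 1) with hF
  set A : Matrix (Fin (m + ∑ k, (msz k - 1))) (Fin (∑ k, msz k)) ℤ :=
    Matrix.of fun k col =>
      if hk : (k : ℕ) < m then
        a (E.symm col).1 ⟨(k : ℕ), hk⟩ * lam (E.symm col).1 (E.symm col).2
      else
        Brow msz c (F.symm ⟨(k : ℕ) - m, by have := k.isLt; omega⟩) (E.symm col)
    with hA
  -- evaluation of hatc along blocks
  have hatc_eval : ∀ (i₀ i : Fin s) (j : Fin (msz i)),
      hatc i₀ (E ⟨i, j⟩) = if i = i₀ then c i j else 0 := by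
    intro i₀ i j
    by_cases h : i = i₀
    · subst h; rw [if_pos rfl]; exact hhatc_block i j
    · rw [if_neg h]
      apply hhatc_off
      intro j' hj'
      have : (⟨i, j⟩ : Σ i, Fin (msz i)) = ⟨i₀, j'⟩ := E.injective (by rw [hj']; rfl)
      exact h (congrArg Sigma.fst this)
  -- generic row evaluations
  have top_eval : ∀ (v : Fin (∑ k, msz k) → ℤ) (k : Fin (m + ∑ k, (msz k - 1)))
      (hk : (k : ℕ) < m),
      A.mulVec v k = ∑ i, a i ⟨(k : ℕ), hk⟩ * ∑ j, lam i j * v (E ⟨i, j⟩) := by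
    intro v k hk
    have h1 : A.mulVec v k = ∑ col, A k col * v col := by
      simp [Matrix.mulVec, dotProduct]
    rw [h1, ← Equiv.sum_comp E (fun col => A k col * v col), ← Finset.univ_sigma_univ,
      Finset.sum_sigma]
    refine Finset.sum_congr rfl fun i _ => ?_
    rw [Finset.mul_sum]
    refine Finset.sum_congr rfl fun j _ => ?_
    show A k (E ⟨i, j⟩) * v (E ⟨i, j⟩) = _
    rw [hA]
    simp only [Matrix.of_apply, dif_pos hk]
    rw [E.symm_apply_apply]
    ring
  have bot_eval : ∀ (v : Fin (∑ k, msz k) → ℤ) (k : Fin (m + ∑ k, (msz k - 1)))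
      (hk : ¬ (k : ℕ) < m),
      A.mulVec v k = ∑ y : Σ i : Fin s, Fin (msz i),
        Brow msz c (F.symm ⟨(k : ℕ) - m, by have := k.isLt; omega⟩) y * v (E y) := by
    intro v k hk
    have h1 : A.mulVec v k = ∑ col, A k col * v col := by
      simp [Matrix.mulVec, dotProduct]
    rw [h1, ← Equiv.sum_comp E (fun col => A k col * v col)]
    refine Finset.sum_congr rfl fun y _ => ?_
    rw [hA]
    simp only [Matrix.of_apply, dif_neg hk, Equiv.symm_apply_apply]
  -- first claim
  have hAc : ∀ i₀, A.mulVec (hatc i₀) =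
      fun k : Fin (m + ∑ k, (msz k - 1)) =>
        if h : (k : ℕ) < m then a i₀ ⟨(k : ℕ), h⟩ else 0 := by
    intro i₀
    funext k
    by_cases hk : (k : ℕ) < m
    · rw [dif_pos hk, top_eval _ k hk, Finset.sum_eq_single i₀]
      · have h2 : ∀ j, lam i₀ j * hatc i₀ (E ⟨i₀, j⟩) = lam i₀ j * c i₀ j := fun j => by
          rw [hatc_eval i₀ i₀ j, if_pos rfl]
        rw [Finset.sum_congr rfl (fun j _ => h2 j), hlam1 i₀, mul_one]
      · intro i _ hne
        have h2 : ∀ j, lam i j * hatc i₀ (E ⟨i, j⟩) = 0 := fun j => by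
          rw [hatc_eval i₀ i j, if_neg hne, mul_zero]
        rw [Finset.sum_congr rfl (fun j _ => h2 j)]
        simp
      · intro h; exact absurd (Finset.mem_univ _) h
    · rw [dif_neg hk, bot_eval _ k hk, Brow_sum]
      set x := F.symm ⟨(k : ℕ) - m, by have := k.isLt; omega⟩ with hx
      rw [hatc_eval i₀ x.1, hatc_eval i₀ x.1]
      by_cases h : x.1 = i₀
      · rw [if_pos h, if_pos h]; ring
      · rw [if_neg h, if_neg h]; ring
  -- second claim: kernel vectors are blockwise proportional to c
  have hker : ∀ v ∈ kerZ A, ∀ i, ∃ t : ℤ,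
      ∀ j : Fin (msz i), v (blockIdx msz i j) = t * c i j := by
    intro v hv i
    have hv' : ∀ k, A.mulVec v k = 0 := fun k => congrFun hv k
    have hrel : ∀ r : Fin (msz i - 1),
        c i ⟨(r : ℕ) + 1, by have := r.isLt; omega⟩ *
            v (E ⟨i, ⟨(r : ℕ), by have := r.isLt; omega⟩⟩)
          = c i ⟨(r : ℕ), by have := r.isLt; omega⟩ *
            v (E ⟨i, ⟨(r : ℕ) + 1, by have := r.isLt; omega⟩⟩) := by
      intro r
      have hFlt : ((F ⟨i, r⟩ : Fin (∑ k, (msz k - 1))) : ℕ) < ∑ k, (msz k - 1) :=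
        (F ⟨i, r⟩).isLt
      set k : Fin (m + ∑ k, (msz k - 1)) := ⟨m + ((F ⟨i, r⟩ : Fin _) : ℕ), by omega⟩ with hk
      have hkm : ¬ (k : ℕ) < m := by simp [hk]
      have h0 := hv' k
      rw [bot_eval v k hkm] at h0
      have hxx : (⟨(k : ℕ) - m, by have := k.isLt; omega⟩ : Fin (∑ k, (msz k - 1)))
          = F ⟨i, r⟩ := by
        apply Fin.ext
        simp [hk]
      rw [hxx, Equiv.symm_apply_apply, Brow_sum] at h0
      have := sub_eq_zero.mp h0
      linarith [this]
    have hchain : ∀ n (hn : n < msz i),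
        c i ⟨0, hmsz i⟩ * v (E ⟨i, ⟨n, hn⟩⟩) = c i ⟨n, hn⟩ * v (E ⟨i, ⟨0, hmsz i⟩⟩) := by
      intro n
      induction n with
      | zero => intro hn; rfl
      | succ n ih =>
        intro hn
        have hn' : n < msz i := by omega
        have hr : n < msz i - 1 := by omega
        have h1 := hrel ⟨n, hr⟩
        have h2 := ih hn'
        have hcn : c i ⟨n, hn'⟩ ≠ 0 := hcfull i _
        apply mul_left_cancel₀ hcn
        calc c i ⟨n, hn'⟩ * (c i ⟨0, hmsz i⟩ * v (E ⟨i, ⟨n + 1, hn⟩⟩))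
            = c i ⟨0, hmsz i⟩ * (c i ⟨n, hn'⟩ * v (E ⟨i, ⟨n + 1, hn⟩⟩)) := by ring
          _ = c i ⟨0, hmsz i⟩ * (c i ⟨n + 1, hn⟩ * v (E ⟨i, ⟨n, hn'⟩⟩)) := by rw [← h1]
          _ = c i ⟨n + 1, hn⟩ * (c i ⟨0, hmsz i⟩ * v (E ⟨i, ⟨n, hn'⟩⟩)) := by ring
          _ = c i ⟨n + 1, hn⟩ * (c i ⟨n, hn'⟩ * v (E ⟨i, ⟨0, hmsz i⟩⟩)) := by rw [h2]
          _ = c i ⟨n, hn'⟩ * (c i ⟨n + 1, hn⟩ * v (E ⟨i, ⟨0, hmsz i⟩⟩)) := by ring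
    have hchain' : ∀ j : Fin (msz i),
        c i ⟨0, hmsz i⟩ * v (E ⟨i, j⟩) = c i j * v (E ⟨i, ⟨0, hmsz i⟩⟩) := by
      intro j
      have := hchain (j : ℕ) j.isLt
      simpa using this
    refine ⟨∑ j, lam i j * v (E ⟨i, j⟩), fun j => ?_⟩
    have hc0 : c i ⟨0, hmsz i⟩ ≠ 0 := hcfull i _
    have hc0t : c i ⟨0, hmsz i⟩ * ∑ j, lam i j * v (E ⟨i, j⟩) = v (E ⟨i, ⟨0, hmsz i⟩⟩) := by
      rw [Finset.mul_sum]
      have h2 : ∀ j : Fin (msz i), c i ⟨0, hmsz i⟩ * (lam i j * v (E ⟨i, j⟩))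
          = lam i j * c i j * v (E ⟨i, ⟨0, hmsz i⟩⟩) := by
        intro j
        have := hchain' j
        calc c i ⟨0, hmsz i⟩ * (lam i j * v (E ⟨i, j⟩))
            = lam i j * (c i ⟨0, hmsz i⟩ * v (E ⟨i, j⟩)) := by ring
          _ = lam i j * (c i j * v (E ⟨i, ⟨0, hmsz i⟩⟩)) := by rw [this]
          _ = lam i j * c i j * v (E ⟨i, ⟨0, hmsz i⟩⟩) := by ring
      rw [Finset.sum_congr rfl (fun j _ => h2 j), ← Finset.sum_mul, hlam1 i, one_mul]
    apply mul_left_cancel₀ hc0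
    have hbi : v (blockIdx msz i j) = v (E ⟨i, j⟩) := rfl
    rw [hbi]
    calc c i ⟨0, hmsz i⟩ * v (E ⟨i, j⟩) = c i j * v (E ⟨i, ⟨0, hmsz i⟩⟩) := hchain' j
      _ = c i j * (c i ⟨0, hmsz i⟩ * ∑ j, lam i j * v (E ⟨i, j⟩)) := by rw [hc0t]
      _ = c i ⟨0, hmsz i⟩ * ((∑ j, lam i j * v (E ⟨i, j⟩)) * c i j) := by ring
  -- evaluation of combinations
  have eval_sum : ∀ (u : Fin s → ℤ) (x : Σ i : Fin s, Fin (msz i)),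
      (∑ i', u i' • hatc i') (E x) = u x.1 * c x.1 x.2 := by
    rintro u ⟨i, j⟩
    rw [Finset.sum_apply, Finset.sum_eq_single i]
    · simp [hatc_eval i i j]
    · intro i' _ hne
      simp [hatc_eval i' i j, if_neg (Ne.symm hne)]
    · intro h; exact absurd (Finset.mem_univ _) h
  refine ⟨A, hAc, hker, ?_, ?_, ?_⟩
  · -- MapsTo
    intro u hu
    have hu' : ∀ k : Fin m, ∑ i, a i k * u i = 0 := by
      intro k
      have := congrFun hu k
      simpa [Matrix.mulVec, dotProduct] using this
    show A.mulVec (∑ i, u i • hatc i) = 0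
    have hdist : A.mulVec (∑ i, u i • hatc i) = ∑ i, u i • A.mulVec (hatc i) := by
      simp only [← Matrix.mulVecLin_apply, map_sum, map_smul]
    rw [hdist]
    funext k
    rw [Finset.sum_apply]
    by_cases hk : (k : ℕ) < m
    · have h2 : ∀ i, (u i • A.mulVec (hatc i)) k = u i * a i ⟨(k : ℕ), hk⟩ := by
        intro i
        rw [Pi.smul_apply, hAc i]
        simp [dif_pos hk]
      rw [Finset.sum_congr rfl (fun i _ => h2 i)]
      have := hu' ⟨(k : ℕ), hk⟩
      rw [show (0 : (Fin (m + ∑ k, (msz k - 1)) → ℤ)) k = 0 from rfl]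
      rw [← this]
      exact Finset.sum_congr rfl fun i _ => by ring
    · have h2 : ∀ i, (u i • A.mulVec (hatc i)) k = 0 := by
        intro i
        rw [Pi.smul_apply, hAc i]
        simp [dif_neg hk]
      rw [Finset.sum_congr rfl (fun i _ => h2 i)]
      simp
  · -- InjOn
    intro u₁ _ u₂ _ heq
    funext i
    beta_reduce at heq
    have h1 := congrFun heq (E ⟨i, ⟨0, hmsz i⟩⟩)
    rw [eval_sum u₁ ⟨i, ⟨0, hmsz i⟩⟩, eval_sum u₂ ⟨i, ⟨0, hmsz i⟩⟩] at h1
    exact mul_right_cancel₀ (hcfull i ⟨0, hmsz i⟩) h1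
  · -- SurjOn
    intro v hv
    choose t ht using hker v hv
    have hv' : ∀ k, A.mulVec v k = 0 := fun k => congrFun hv k
    refine ⟨t, ?_, ?_⟩
    · show (Matrix.of fun k i => a i k).mulVec t = 0
      funext k
      have hklt : (k : ℕ) < m + ∑ k, (msz k - 1) := by have := k.isLt; omega
      have h0 := hv' ⟨(k : ℕ), hklt⟩
      rw [top_eval v ⟨(k : ℕ), hklt⟩ k.isLt] at h0
      have h2 : ∀ i, a i ⟨(k : ℕ), k.isLt⟩ * ∑ j, lam i j * v (E ⟨i, j⟩)
          = a i k * t i := by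
        intro i
        have h3 : ∀ j : Fin (msz i), lam i j * v (E ⟨i, j⟩) = lam i j * c i j * t i := by
          intro j
          have : v (E ⟨i, j⟩) = t i * c i j := ht i j
          rw [this]; ring
        rw [Finset.sum_congr rfl (fun j _ => h3 j), ← Finset.sum_mul, hlam1 i, one_mul,
          Fin.eta]
      rw [Finset.sum_congr rfl (fun i _ => h2 i)] at h0
      simpa [Matrix.mulVec, dotProduct] using h0
    · funext col
      obtain ⟨x, rfl⟩ := E.surjective col
      beta_reduce
      rw [eval_sum t x]
      exact (ht x.1 x.2).symm
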